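/- The operator Δ := [D_α, E₂] has the explicit form Δ = (α−1)·Σ_{i≥2} (i−1)²·pᵢ·∂_{i−1} + α·Σ_{i,j≥1} i·j·p_{i+j+1}·∂ᵢ∂ⱼ + Σ_{i,j≥1} (i+j−1)·pᵢ·pⱼ·∂_{i+j−1} as R-linear operators on A. -/

import Mathlib

/- R = ℚ[α], A = R[p₁,p₂,…].  Δ := [D_α, E₂] equals
   (α−1)·Σ_{i≥2}(i−1)²·pᵢ·∂_{i−1} + α·Σ_{i,j≥1} ij·p_{i+j+1}·∂ᵢ∂ⱼ
   + Σ_{i,j≥1}(i+j−1)·pᵢ·pⱼ·∂_{i+j−1}.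
   (In the first sum the i = 1 term has zero coefficient, so summing over all i ≥ 1
   with truncated subtraction in ℕ+ agrees with summing over i ≥ 2.) -/

open MvPolynomial

noncomputable section

abbrev R : Type := Polynomial ℚ
abbrev A : Type := MvPolynomial ℕ+ R

/-- the variable α of R = ℚ[α] -/
def α : R := Polynomial.X

/-- the power-sum generator pᵢ (i ≥ 1) -/
def p (i : ℕ+) : A := X i

/-- the partial derivative ∂/∂pᵢ -/
def d (i : ℕ+) (f : A) : A := pderiv i f

/-- the Laplace–Beltrami operator D_α -/
def Dal (f : A) : A :=
    (Polynomial.C (1/2 : ℚ) * (α - 1)) •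
      (∑ᶠ i : ℕ+, (((i : ℕ) : R) * (((i : ℕ) : R) - 1)) • (p i * d i f))
  + (Polynomial.C (1/2 : ℚ) * α) •
      (∑ᶠ i : ℕ+, ∑ᶠ j : ℕ+, (((i : ℕ) : R) * ((j : ℕ) : R)) • (p (i + j) * d i (d j f)))
  + Polynomial.C (1/2 : ℚ) •
      (∑ᶠ i : ℕ+, ∑ᶠ j : ℕ+, (((i : ℕ) : R) + ((j : ℕ) : R)) • (p i * p j * d (i + j) f))

/-- E₂ = Σ_{i≥1} i·p_{i+1}·∂ᵢ -/
def E₂ (f : A) : A := ∑ᶠ i : ℕ+, ((i : ℕ) : R) • (p (i + 1) * d i f)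

/-- Δ = [D_α, E₂] -/
def Δop (f : A) : A := Dal (E₂ f) - E₂ (Dal f)

set_option maxHeartbeats 1000000


-- ### PNat arithmetic
lemma pnat_one_lt_add (a b : ℕ+) : 1 < a + b :=
  lt_of_le_of_lt a.one_le (PNat.lt_add_right a b)
lemma pnat_sub_one_add (a b : ℕ+) (ha : 1 < a) : (a - 1) + b = a + b - 1 := by
  apply PNat.coe_injective
  rw [PNat.add_coe, PNat.sub_coe, PNat.sub_coe, if_pos ha, if_pos (pnat_one_lt_add a b),
    PNat.add_coe, PNat.one_coe]
  have h1 : (1:ℕ) ≤ (a:ℕ) := a.one_le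
  have h2 : (1:ℕ) ≤ (b:ℕ) := b.one_le
  omega
lemma pnat_add_one_sub_one (a : ℕ+) : a + 1 - 1 = a := by
  apply PNat.coe_injective
  rw [PNat.sub_coe, if_pos (pnat_one_lt_add a 1), PNat.add_coe, PNat.one_coe]
  omega
lemma pnat_sub_one_add_one {a : ℕ+} (ha : 1 < a) : a - 1 + 1 = a := by
  apply PNat.coe_injective
  rw [PNat.add_coe, PNat.sub_coe, if_pos ha, PNat.one_coe]
  have h1 : (1:ℕ) < (a:ℕ) := ha
  omega
lemma pnat_succ_le_succ_iff (a M : ℕ+) : a + 1 ≤ M + 1 ↔ a ≤ M := by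
  rw [← PNat.coe_le_coe, ← PNat.coe_le_coe, PNat.add_coe, PNat.add_coe, PNat.one_coe]
  omega
lemma pnat_coe_sub_one {a : ℕ+} (ha : 1 < a) : ((a - 1 : ℕ+) : ℕ) = (a:ℕ) - 1 := by
  rw [PNat.sub_coe, if_pos ha, PNat.one_coe]
lemma pnat_lt_sub_one {M a : ℕ+} (h : M + 1 < a) : M < a - 1 := by
  have h1 : ((M:ℕ) + 1) < (a:ℕ) := h
  have h2 : (1:ℕ+) < a := lt_of_le_of_lt (M+1).one_le h
  rw [← PNat.coe_lt_coe, pnat_coe_sub_one h2]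
  omega

-- ### coefficient casts
@[reducible] def cc (i : ℕ+) : R := ((i : ℕ) : R)
lemma cc_add (a b : ℕ+) : cc (a + b) = cc a + cc b := by
  simp [cc, PNat.add_coe]
lemma cc_one : cc 1 = 1 := by simp [cc]
lemma cc_add_one (a : ℕ+) : cc (a + 1) = cc a + 1 := by rw [cc_add, cc_one]
lemma cc_sub_one {a : ℕ+} (ha : 1 < a) : cc (a - 1) = cc a - 1 := by
  have h1 : (1:ℕ) ≤ (a:ℕ) := a.one_le
  simp [cc, pnat_coe_sub_one ha, Nat.cast_sub h1]

-- ### derivative basics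
lemma d_zero (i : ℕ+) : d i (0 : A) = 0 := map_zero _
lemma d_add (i : ℕ+) (x y : A) : d i (x + y) = d i x + d i y := map_add _ _ _
lemma d_smul (i : ℕ+) (c : R) (x : A) : d i (c • x) = c • d i x := by simp [d]
lemma d_sum (i : ℕ+) (s : Finset ℕ+) (F : ℕ+ → A) :
    d i (∑ j ∈ s, F j) = ∑ j ∈ s, d i (F j) := map_sum _ _ _
lemma d_mul (i : ℕ+) (x y : A) : d i (x * y) = d i x * y + x * d i y := pderiv_mul
lemma d_p (k m : ℕ+) : d k (p m) = if m = k then 1 else 0 := by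
  by_cases h : m = k
  · subst h; simp [d, p, pderiv_X_self]
  · simp [d, p, pderiv_X_of_ne h, h]
lemma d_comm (i j : ℕ+) (f : A) : d i (d j f) = d j (d i f) := by
  induction f using MvPolynomial.induction_on with
  | C a => simp [d]
  | add x y hx hy => simp only [d, map_add] at hx hy ⊢; rw [hx, hy]
  | mul_X x n ih =>
    have hz : ∀ a b : ℕ+, d a (d b (X n : A)) = 0 := by
      intro a b
      by_cases h : n = b
      · subst h; simp [d, pderiv_X_self]
      · simp [d, pderiv_X_of_ne h]
    simp only [d] at ih hz ⊢
    simp only [pderiv_mul, map_add, pderiv_mul, ih, hz, mul_zero, add_zero]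
    ring
lemma d_ite (a : ℕ+) (P : Prop) [Decidable P] (x : A) :
    d a (if P then x else 0) = if P then d a x else 0 := by
  split_ifs <;> simp [d]

-- ### finsum conversions
lemma fin1 {F : ℕ+ → A} {s : Finset ℕ+} (h : ∀ i ∉ s, F i = 0) :
    ∑ᶠ i, F i = ∑ i ∈ s, F i := by
  refine finsum_eq_sum_of_support_subset F ?_
  intro x hx
  simp only [Function.mem_support] at hx
  simp only [Finset.mem_coe]
  by_contra hc; exact hx (h x hc)
lemma fin2 {F : ℕ+ → ℕ+ → A} {s : Finset ℕ+} (h1 : ∀ a, ∀ b ∉ s, F a b = 0)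
    (h2 : ∀ a ∉ s, ∀ b ∈ s, F a b = 0) :
    (∑ᶠ a, ∑ᶠ b, F a b) = ∑ a ∈ s, ∑ b ∈ s, F a b := by
  rw [finsum_congr (fun a => fin1 (h1 a))]
  exact fin1 (fun a ha => Finset.sum_eq_zero (h2 a ha))

-- ### membership
lemma mem_I {M i : ℕ+} : i ∈ Finset.Icc 1 M ↔ i ≤ M := by
  simp [Finset.mem_Icc, i.one_le]
lemma not_mem_I {M i : ℕ+} : i ∉ Finset.Icc 1 M ↔ M < i := by
  rw [mem_I, not_le]

-- ### collapse and expansion helpers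
lemma collapse {s : Finset ℕ+} {m : ℕ+} (hm : m ∈ s) (G : ℕ+ → A) :
    ∑ k ∈ s, (if m = k then G k else 0) = G m := by
  rw [Finset.sum_ite_eq, if_pos hm]
lemma collapse' {s : Finset ℕ+} {m : ℕ+} (hm : m ∈ s) (G : ℕ+ → A) :
    ∑ k ∈ s, (if k = m then G k else 0) = G m := by
  rw [Finset.sum_ite_eq', if_pos hm]

lemma smul_congr {a b : R} {x y : A} (h1 : a = b) (h2 : x = y) : a • x = b • y := by
  rw [h1, h2]

-- ### generic Leibniz expansion of one-p-factor sums
lemma d_sum_form (k : ℕ+) (s : Finset ℕ+) (co : ℕ+ → R) (g : ℕ+ → ℕ+) (F : ℕ+ → A) :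
    d k (∑ i ∈ s, co i • (p (g i) * F i))
      = (∑ i ∈ s, if g i = k then co i • F i else 0)
        + ∑ i ∈ s, co i • (p (g i) * d k (F i)) := by
  rw [d_sum, ← Finset.sum_add_distrib]
  refine Finset.sum_congr rfl fun i _ => ?_
  rw [d_smul, d_mul, d_p]
  by_cases h : g i = k
  · simp [h, smul_add]
  · simp [h, smul_add]

-- ### generic Leibniz expansion of two-p-factor sums
lemma d_sum_form2 (k : ℕ+) (s : Finset ℕ+) (co : ℕ+ → R) (g h' : ℕ+ → ℕ+) (F : ℕ+ → A) :
    d k (∑ i ∈ s, co i • (p (g i) * p (h' i) * F i))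
      = (∑ i ∈ s, if g i = k then co i • (p (h' i) * F i) else 0)
        + (∑ i ∈ s, if h' i = k then co i • (p (g i) * F i) else 0)
        + ∑ i ∈ s, co i • (p (g i) * p (h' i) * d k (F i)) := by
  rw [d_sum, ← Finset.sum_add_distrib, ← Finset.sum_add_distrib]
  refine Finset.sum_congr rfl fun i _ => ?_
  rw [d_smul, d_mul, d_mul, d_p, d_p]
  by_cases h1 : g i = k <;> by_cases h2 : h' i = k <;>
    simp [h1, h2, smul_add, add_mul, mul_comm] <;> ring_nf <;>
    simp [smul_add, add_comm]
lemma d_zero_of (i : ℕ+) (f : A) (h : i ∉ f.vars) : d i f = 0 :=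
  pderiv_eq_zero_of_notMem_vars h
-- chunk 2 (appended to base)
def L1 (f : A) : A := ∑ᶠ i : ℕ+, (cc i * (cc i - 1)) • (p i * d i f)
def L2 (f : A) : A := ∑ᶠ i : ℕ+, ∑ᶠ j : ℕ+, (cc i * cc j) • (p (i + j) * d i (d j f))
def L3 (f : A) : A := ∑ᶠ i : ℕ+, ∑ᶠ j : ℕ+, (cc i + cc j) • (p i * p j * d (i + j) f)

section main
variable (f : A) (N : ℕ+) (hf : ∀ i : ℕ+, N < i → d i f = 0)
include hf

lemma hd2 (a b : ℕ+) (h : N < a ∨ N < b) : d a (d b f) = 0 := by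
  rcases h with h | h
  · rw [d_comm, hf a h, d_zero]
  · rw [hf b h, d_zero]

lemma hd3 (a b c : ℕ+) (h : N < a ∨ N < b ∨ N < c) : d a (d b (d c f)) = 0 := by
  rcases h with h | h | h
  · rw [d_comm, hd2 f N hf a c (Or.inl h), d_zero]
  · rw [hd2 f N hf b c (Or.inl h), d_zero]
  · rw [hf c h, d_zero, d_zero]

lemma eE : E₂ f = ∑ i ∈ Finset.Icc 1 N, cc i • (p (i + 1) * d i f) := by
  apply fin1
  intro i hi
  rw [hf i (not_mem_I.mp hi), mul_zero, smul_zero]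

lemma eL1 : L1 f = ∑ i ∈ Finset.Icc 1 N, (cc i * (cc i - 1)) • (p i * d i f) := by
  apply fin1
  intro i hi
  rw [hf i (not_mem_I.mp hi), mul_zero, smul_zero]

lemma eL2 : L2 f = ∑ a ∈ Finset.Icc 1 N, ∑ b ∈ Finset.Icc 1 N,
    (cc a * cc b) • (p (a + b) * d a (d b f)) := by
  apply fin2
  · intro a b hb
    rw [hd2 f N hf a b (Or.inr (not_mem_I.mp hb)), mul_zero, smul_zero]
  · intro a ha b _
    rw [hd2 f N hf a b (Or.inl (not_mem_I.mp ha)), mul_zero, smul_zero]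

lemma eL3 : L3 f = ∑ a ∈ Finset.Icc 1 N, ∑ b ∈ Finset.Icc 1 N,
    (cc a + cc b) • (p a * p b * d (a + b) f) := by
  apply fin2
  · intro a b hb
    rw [hf (a+b) ((not_mem_I.mp hb).trans (PNat.lt_add_left b a)), mul_zero, smul_zero]
  · intro a ha b _
    rw [hf (a+b) ((not_mem_I.mp ha).trans (PNat.lt_add_right a b)), mul_zero, smul_zero]

lemma dE (k : ℕ+) : d k (E₂ f)
    = (∑ i ∈ Finset.Icc 1 N, if i + 1 = k then cc i • d i f else 0)
      + ∑ i ∈ Finset.Icc 1 N, cc i • (p (i + 1) * d k (d i f)) := by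
  rw [eE f N hf]
  exact d_sum_form k _ _ _ _

lemma dE0 (k : ℕ+) (hk : N + 1 < k) : d k (E₂ f) = 0 := by
  rw [dE f N hf k]
  have hNk : N < k := lt_trans (PNat.lt_add_right N 1) hk
  rw [Finset.sum_eq_zero, Finset.sum_eq_zero, add_zero]
  · intro i _
    rw [hd2 f N hf k i (Or.inl hNk), mul_zero, smul_zero]
  · intro i hi
    rw [if_neg (ne_of_lt (lt_of_le_of_lt (add_le_add (mem_I.mp hi) le_rfl) hk))]

lemma ddE (a b : ℕ+) : d a (d b (E₂ f))
    = (∑ i ∈ Finset.Icc 1 N, if i + 1 = b then cc i • d a (d i f) else 0)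
      + ((∑ i ∈ Finset.Icc 1 N, if i + 1 = a then cc i • (d b (d i f)) else 0)
        + ∑ i ∈ Finset.Icc 1 N, cc i • (p (i + 1) * d a (d b (d i f)))) := by
  rw [dE f N hf b, d_add, d_sum, d_sum_form]
  congr 1
  refine Finset.sum_congr rfl fun i _ => ?_
  rw [d_ite, d_smul]

lemma dL1 (k : ℕ+) : d k (L1 f)
    = (∑ i ∈ Finset.Icc 1 N, if i = k then (cc i * (cc i - 1)) • d i f else 0)
      + ∑ i ∈ Finset.Icc 1 N, (cc i * (cc i - 1)) • (p i * d k (d i f)) := by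
  rw [eL1 f N hf]
  exact d_sum_form k _ _ (fun i => i) _

lemma dL1z (k : ℕ+) (hk : N < k) : d k (L1 f) = 0 := by
  rw [dL1 f N hf k, Finset.sum_eq_zero, Finset.sum_eq_zero, add_zero]
  · intro i _
    rw [hd2 f N hf k i (Or.inl hk), mul_zero, smul_zero]
  · intro i hi
    rw [if_neg (ne_of_lt (lt_of_le_of_lt (mem_I.mp hi) hk))]

lemma dL2 (k : ℕ+) : d k (L2 f)
    = (∑ a ∈ Finset.Icc 1 N, ∑ b ∈ Finset.Icc 1 N,
        if a + b = k then (cc a * cc b) • d a (d b f) else 0)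
      + ∑ a ∈ Finset.Icc 1 N, ∑ b ∈ Finset.Icc 1 N,
        (cc a * cc b) • (p (a + b) * d k (d a (d b f))) := by
  rw [eL2 f N hf, d_sum, ← Finset.sum_add_distrib]
  refine Finset.sum_congr rfl fun a _ => ?_
  exact d_sum_form k _ _ _ _

lemma dL2z (k : ℕ+) (hk : N + N < k) : d k (L2 f) = 0 := by
  have hNk : N < k := lt_trans (PNat.lt_add_right N N) hk
  rw [dL2 f N hf k, Finset.sum_eq_zero, Finset.sum_eq_zero, add_zero]
  · intro a _
    refine Finset.sum_eq_zero fun b _ => ?_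
    rw [hd3 f N hf k a b (Or.inl hNk), mul_zero, smul_zero]
  · intro a ha
    refine Finset.sum_eq_zero fun b hb => ?_
    rw [if_neg (ne_of_lt (lt_of_le_of_lt (add_le_add (mem_I.mp ha) (mem_I.mp hb)) hk))]

lemma dL3 (k : ℕ+) : d k (L3 f)
    = ((∑ a ∈ Finset.Icc 1 N, ∑ b ∈ Finset.Icc 1 N,
        if a = k then (cc a + cc b) • (p b * d (a + b) f) else 0)
      + ∑ a ∈ Finset.Icc 1 N, ∑ b ∈ Finset.Icc 1 N,
        if b = k then (cc a + cc b) • (p a * d (a + b) f) else 0)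
      + ∑ a ∈ Finset.Icc 1 N, ∑ b ∈ Finset.Icc 1 N,
        (cc a + cc b) • (p a * p b * d k (d (a + b) f)) := by
  rw [eL3 f N hf, d_sum, ← Finset.sum_add_distrib, ← Finset.sum_add_distrib]
  refine Finset.sum_congr rfl fun a _ => ?_
  exact d_sum_form2 k _ _ (fun _ => a) (fun b => b) _

lemma dL3z (k : ℕ+) (hk : N < k) : d k (L3 f) = 0 := by
  rw [dL3 f N hf k, Finset.sum_eq_zero, Finset.sum_eq_zero, Finset.sum_eq_zero, add_zero, add_zero]
  · intro a _
    refine Finset.sum_eq_zero fun b _ => ?_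
    rw [hd2 f N hf k (a+b) (Or.inl hk), mul_zero, smul_zero]
  · intro a _
    refine Finset.sum_eq_zero fun b hb => ?_
    rw [if_neg (ne_of_lt (lt_of_le_of_lt (mem_I.mp hb) hk))]
  · intro a ha
    refine Finset.sum_eq_zero fun b _ => ?_
    rw [if_neg (ne_of_lt (lt_of_le_of_lt (mem_I.mp ha) hk))]

end main
lemma pull (gk ci : R) (x y : A) (P : Prop) [Decidable P] :
    gk • (x * (if P then ci • y else 0)) = if P then (gk * ci) • (x * y) else 0 := by
  split_ifs
  · rw [mul_smul_comm, smul_smul]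
  · rw [mul_zero, smul_zero]

lemma pull2 (gk ci : R) (x y : A) : gk • (x * (ci • y)) = (gk * ci) • (x * y) := by
  rw [mul_smul_comm, smul_smul]

section main2
variable (f : A) (N : ℕ+) (hf : ∀ i : ℕ+, N < i → d i f = 0)
include hf

lemma uL1 : L1 (E₂ f)
    = (∑ i ∈ Finset.Icc 1 N, (cc (i+1) * (cc (i+1) - 1) * cc i) • (p (i+1) * d i f))
      + ∑ k ∈ Finset.Icc 1 N, ∑ i ∈ Finset.Icc 1 N,
          (cc k * (cc k - 1) * cc i) • (p k * (p (i+1) * d k (d i f))) := by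
  have h1 : L1 (E₂ f) = ∑ k ∈ Finset.Icc 1 (N+1), (cc k * (cc k - 1)) • (p k * d k (E₂ f)) :=
    fin1 (fun k hk => by rw [dE0 f N hf k (not_mem_I.mp hk), mul_zero, smul_zero])
  rw [h1, Finset.sum_congr rfl (fun k _ => by rw [dE f N hf k, mul_add, smul_add]),
    Finset.sum_add_distrib]
  refine congrArg₂ (· + ·) ?_ ?_
  · calc ∑ k ∈ Finset.Icc 1 (N+1), (cc k * (cc k - 1)) • (p k * ∑ i ∈ Finset.Icc 1 N,
        if i + 1 = k then cc i • d i f else 0)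
        = ∑ k ∈ Finset.Icc 1 (N+1), ∑ i ∈ Finset.Icc 1 N,
            (if i + 1 = k then (cc k * (cc k - 1) * cc i) • (p k * d i f) else 0) := by
          refine Finset.sum_congr rfl fun k _ => ?_
          rw [Finset.mul_sum, Finset.smul_sum]
          exact Finset.sum_congr rfl fun i _ => pull _ _ _ _ _
      _ = ∑ i ∈ Finset.Icc 1 N, ∑ k ∈ Finset.Icc 1 (N+1),
            (if i + 1 = k then (cc k * (cc k - 1) * cc i) • (p k * d i f) else 0) :=
          Finset.sum_comm
      _ = _ := by
          refine Finset.sum_congr rfl fun i hi => ?_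
          exact collapse (mem_I.mpr (add_le_add (mem_I.mp hi) le_rfl))
            (fun k => (cc k * (cc k - 1) * cc i) • (p k * d i f))
  · calc ∑ k ∈ Finset.Icc 1 (N+1), (cc k * (cc k - 1)) • (p k * ∑ i ∈ Finset.Icc 1 N,
        cc i • (p (i+1) * d k (d i f)))
        = ∑ k ∈ Finset.Icc 1 (N+1), ∑ i ∈ Finset.Icc 1 N,
            (cc k * (cc k - 1) * cc i) • (p k * (p (i+1) * d k (d i f))) := by
          refine Finset.sum_congr rfl fun k _ => ?_
          rw [Finset.mul_sum, Finset.smul_sum]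
          exact Finset.sum_congr rfl fun i _ => pull2 _ _ _ _
      _ = _ := by
          refine (Finset.sum_subset (Finset.Icc_subset_Icc_right (le_of_lt (PNat.lt_add_right N 1))) ?_).symm
          intro k _ hk
          refine Finset.sum_eq_zero fun i _ => ?_
          rw [hd2 f N hf k i (Or.inl (not_mem_I.mp hk)), mul_zero, mul_zero, smul_zero]

lemma uE1 : E₂ (L1 f)
    = (∑ k ∈ Finset.Icc 1 N, (cc k * (cc k * (cc k - 1))) • (p (k+1) * d k f))
      + ∑ k ∈ Finset.Icc 1 N, ∑ i ∈ Finset.Icc 1 N,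
          (cc k * (cc i * (cc i - 1))) • (p (k+1) * (p i * d k (d i f))) := by
  have h1 : E₂ (L1 f) = ∑ k ∈ Finset.Icc 1 N, cc k • (p (k+1) * d k (L1 f)) :=
    fin1 (fun k hk => by rw [dL1z f N hf k (not_mem_I.mp hk), mul_zero, smul_zero])
  rw [h1, Finset.sum_congr rfl (fun k _ => by rw [dL1 f N hf k, mul_add, smul_add]),
    Finset.sum_add_distrib]
  refine congrArg₂ (· + ·) ?_ ?_
  · refine Finset.sum_congr rfl fun k hk => ?_
    rw [Finset.mul_sum, Finset.smul_sum,
      Finset.sum_congr rfl (fun i _ => pull (cc k) (cc i * (cc i - 1)) (p (k+1)) (d i f) _)]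
    exact collapse' (mem_I.mpr (mem_I.mp hk))
      (fun i => (cc k * (cc i * (cc i - 1))) • (p (k+1) * d i f))
  · refine Finset.sum_congr rfl fun k _ => ?_
    rw [Finset.mul_sum, Finset.smul_sum]
    exact Finset.sum_congr rfl fun i _ => pull2 _ _ _ _

lemma pieceOne : L1 (E₂ f) - E₂ (L1 f)
    = (2:R) • ∑ i ∈ Finset.Icc 1 N, (cc i * cc i) • (p (i+1) * d i f) := by
  rw [uL1 f N hf, uE1 f N hf]
  have hdouble : (∑ k ∈ Finset.Icc 1 N, ∑ i ∈ Finset.Icc 1 N,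
      (cc k * (cc k - 1) * cc i) • (p k * (p (i+1) * d k (d i f))))
      = ∑ k ∈ Finset.Icc 1 N, ∑ i ∈ Finset.Icc 1 N,
      (cc k * (cc i * (cc i - 1))) • (p (k+1) * (p i * d k (d i f))) := by
    rw [Finset.sum_comm]
    refine Finset.sum_congr rfl fun x _ => Finset.sum_congr rfl fun y _ => ?_
    exact smul_congr (by ring) (by rw [d_comm]; ring)
  rw [hdouble, add_sub_add_right_eq_sub, ← Finset.sum_sub_distrib, Finset.smul_sum]
  refine Finset.sum_congr rfl fun i _ => ?_
  rw [← sub_smul, smul_smul]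
  exact smul_congr (by rw [cc_add_one]; ring) rfl

end main2
lemma d_comm3 (k a b : ℕ+) (f : A) : d k (d a (d b f)) = d a (d b (d k f)) := by
  rw [d_comm k a (d b f), d_comm k b f]

section main3
variable (f : A) (N : ℕ+) (hf : ∀ i : ℕ+, N < i → d i f = 0)
include hf

lemma ddE0a (a b : ℕ+) (ha : N + 1 < a) : d a (d b (E₂ f)) = 0 := by
  rw [d_comm, dE0 f N hf a ha, d_zero]

lemma uL2 : L2 (E₂ f)
    = (∑ a ∈ Finset.Icc 1 N, ∑ i ∈ Finset.Icc 1 N,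
        (cc a * cc (i+1) * cc i) • (p (a + (i+1)) * d a (d i f)))
      + ((∑ b ∈ Finset.Icc 1 N, ∑ i ∈ Finset.Icc 1 N,
        (cc (i+1) * cc b * cc i) • (p ((i+1) + b) * d b (d i f)))
      + ∑ a ∈ Finset.Icc 1 N, ∑ b ∈ Finset.Icc 1 N, ∑ i ∈ Finset.Icc 1 N,
        (cc a * cc b * cc i) • (p (a + b) * (p (i+1) * d a (d b (d i f))))) := by
  have h1 : L2 (E₂ f) = ∑ a ∈ Finset.Icc 1 (N+1), ∑ b ∈ Finset.Icc 1 (N+1),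
      (cc a * cc b) • (p (a + b) * d a (d b (E₂ f))) := by
    apply fin2
    · intro a b hb
      rw [dE0 f N hf b (not_mem_I.mp hb), d_zero, mul_zero, smul_zero]
    · intro a ha b _
      rw [ddE0a f N hf a b (not_mem_I.mp ha), mul_zero, smul_zero]
  rw [h1, Finset.sum_congr rfl (fun a _ => by
      rw [Finset.sum_congr rfl (fun b _ => by
        rw [ddE f N hf a b, mul_add, mul_add, smul_add, smul_add]),
        Finset.sum_add_distrib, Finset.sum_add_distrib]),
    Finset.sum_add_distrib, Finset.sum_add_distrib]
  refine congrArg₂ (· + ·) ?_ ?_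
  -- X part
  · calc ∑ a ∈ Finset.Icc 1 (N+1), ∑ b ∈ Finset.Icc 1 (N+1),
        (cc a * cc b) • (p (a + b) * ∑ i ∈ Finset.Icc 1 N,
          if i + 1 = b then cc i • d a (d i f) else 0)
        = ∑ a ∈ Finset.Icc 1 (N+1), ∑ b ∈ Finset.Icc 1 (N+1), ∑ i ∈ Finset.Icc 1 N,
            if i + 1 = b then (cc a * cc b * cc i) • (p (a + b) * d a (d i f)) else 0 := by
          refine Finset.sum_congr rfl fun a _ => Finset.sum_congr rfl fun b _ => ?_
          rw [Finset.mul_sum, Finset.smul_sum]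
          exact Finset.sum_congr rfl fun i _ => pull _ _ _ _ _
      _ = ∑ a ∈ Finset.Icc 1 (N+1), ∑ i ∈ Finset.Icc 1 N,
            (cc a * cc (i+1) * cc i) • (p (a + (i+1)) * d a (d i f)) := by
          refine Finset.sum_congr rfl fun a _ => ?_
          rw [Finset.sum_comm]
          refine Finset.sum_congr rfl fun i hi => ?_
          exact collapse (mem_I.mpr (add_le_add (mem_I.mp hi) le_rfl))
            (fun b => (cc a * cc b * cc i) • (p (a + b) * d a (d i f)))
      _ = _ := by
          refine (Finset.sum_subset (Finset.Icc_subset_Icc_right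
            (le_of_lt (PNat.lt_add_right N 1))) ?_).symm
          intro a _ ha
          refine Finset.sum_eq_zero fun i _ => ?_
          rw [hd2 f N hf a i (Or.inl (not_mem_I.mp ha)), mul_zero, smul_zero]
  refine congrArg₂ (· + ·) ?_ ?_
  -- Y part
  · calc ∑ a ∈ Finset.Icc 1 (N+1), ∑ b ∈ Finset.Icc 1 (N+1),
        (cc a * cc b) • (p (a + b) * ∑ i ∈ Finset.Icc 1 N,
          if i + 1 = a then cc i • d b (d i f) else 0)
        = ∑ b ∈ Finset.Icc 1 (N+1), ∑ i ∈ Finset.Icc 1 N, ∑ a ∈ Finset.Icc 1 (N+1),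
            if i + 1 = a then (cc a * cc b * cc i) • (p (a + b) * d b (d i f)) else 0 := by
          rw [Finset.sum_comm]
          refine Finset.sum_congr rfl fun b _ => ?_
          rw [Finset.sum_congr rfl (fun a _ => by
            rw [Finset.mul_sum, Finset.smul_sum,
              Finset.sum_congr rfl (fun i _ => pull (cc a * cc b) (cc i) (p (a+b)) (d b (d i f)) _)])]
          exact Finset.sum_comm
      _ = ∑ b ∈ Finset.Icc 1 (N+1), ∑ i ∈ Finset.Icc 1 N,
            (cc (i+1) * cc b * cc i) • (p ((i+1) + b) * d b (d i f)) := by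
          refine Finset.sum_congr rfl fun b _ => Finset.sum_congr rfl fun i hi => ?_
          exact collapse (mem_I.mpr (add_le_add (mem_I.mp hi) le_rfl))
            (fun a => (cc a * cc b * cc i) • (p (a + b) * d b (d i f)))
      _ = _ := by
          refine (Finset.sum_subset (Finset.Icc_subset_Icc_right
            (le_of_lt (PNat.lt_add_right N 1))) ?_).symm
          intro b _ hb
          refine Finset.sum_eq_zero fun i _ => ?_
          rw [hd2 f N hf b i (Or.inl (not_mem_I.mp hb)), mul_zero, smul_zero]
  -- Z part
  · calc ∑ a ∈ Finset.Icc 1 (N+1), ∑ b ∈ Finset.Icc 1 (N+1),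
        (cc a * cc b) • (p (a + b) * ∑ i ∈ Finset.Icc 1 N,
          cc i • (p (i+1) * d a (d b (d i f))))
        = ∑ a ∈ Finset.Icc 1 (N+1), ∑ b ∈ Finset.Icc 1 (N+1), ∑ i ∈ Finset.Icc 1 N,
            (cc a * cc b * cc i) • (p (a + b) * (p (i+1) * d a (d b (d i f)))) := by
          refine Finset.sum_congr rfl fun a _ => Finset.sum_congr rfl fun b _ => ?_
          rw [Finset.mul_sum, Finset.smul_sum]
          exact Finset.sum_congr rfl fun i _ => pull2 _ _ _ _
      _ = ∑ a ∈ Finset.Icc 1 N, ∑ b ∈ Finset.Icc 1 (N+1), ∑ i ∈ Finset.Icc 1 N,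
            (cc a * cc b * cc i) • (p (a + b) * (p (i+1) * d a (d b (d i f)))) := by
          refine (Finset.sum_subset (Finset.Icc_subset_Icc_right
            (le_of_lt (PNat.lt_add_right N 1))) ?_).symm
          intro a _ ha
          refine Finset.sum_eq_zero fun b _ => Finset.sum_eq_zero fun i _ => ?_
          rw [hd3 f N hf a b i (Or.inl (not_mem_I.mp ha)), mul_zero, mul_zero, smul_zero]
      _ = _ := by
          refine Finset.sum_congr rfl fun a _ => ?_
          refine (Finset.sum_subset (Finset.Icc_subset_Icc_right
            (le_of_lt (PNat.lt_add_right N 1))) ?_).symm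
          intro b _ hb
          refine Finset.sum_eq_zero fun i _ => ?_
          rw [hd3 f N hf a b i (Or.inr (Or.inl (not_mem_I.mp hb))), mul_zero, mul_zero, smul_zero]

end main3
section main4
variable (f : A) (N : ℕ+) (hf : ∀ i : ℕ+, N < i → d i f = 0)
include hf

lemma uE2 : E₂ (L2 f)
    = (∑ a ∈ Finset.Icc 1 N, ∑ b ∈ Finset.Icc 1 N,
        (cc (a+b) * (cc a * cc b)) • (p ((a+b) + 1) * d a (d b f)))
      + ∑ k ∈ Finset.Icc 1 N, ∑ a ∈ Finset.Icc 1 N, ∑ b ∈ Finset.Icc 1 N,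
        (cc k * (cc a * cc b)) • (p (k+1) * (p (a+b) * d k (d a (d b f)))) := by
  have h1 : E₂ (L2 f) = ∑ k ∈ Finset.Icc 1 (N+N), cc k • (p (k+1) * d k (L2 f)) :=
    fin1 (fun k hk => by rw [dL2z f N hf k (not_mem_I.mp hk), mul_zero, smul_zero])
  rw [h1, Finset.sum_congr rfl (fun k _ => by rw [dL2 f N hf k, mul_add, smul_add]),
    Finset.sum_add_distrib]
  congr 1
  · calc ∑ k ∈ Finset.Icc 1 (N+N), cc k • (p (k+1) * ∑ a ∈ Finset.Icc 1 N, ∑ b ∈ Finset.Icc 1 N,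
        if a + b = k then (cc a * cc b) • d a (d b f) else 0)
        = ∑ a ∈ Finset.Icc 1 N, ∑ b ∈ Finset.Icc 1 N, ∑ k ∈ Finset.Icc 1 (N+N),
            if a + b = k then (cc k * (cc a * cc b)) • (p (k+1) * d a (d b f)) else 0 := by
          rw [Finset.sum_congr rfl (fun k _ => by
            rw [Finset.mul_sum, Finset.smul_sum, Finset.sum_congr rfl (fun a _ => by
              rw [Finset.mul_sum, Finset.smul_sum,
                Finset.sum_congr rfl (fun b _ => pull (cc k) (cc a * cc b) (p (k+1)) (d a (d b f)) _)])]),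
            Finset.sum_comm]
          exact Finset.sum_congr rfl fun a _ => Finset.sum_comm
      _ = _ := by
          refine Finset.sum_congr rfl fun a ha => Finset.sum_congr rfl fun b hb => ?_
          exact collapse (mem_I.mpr (add_le_add (mem_I.mp ha) (mem_I.mp hb)))
            (fun k => (cc k * (cc a * cc b)) • (p (k+1) * d a (d b f)))
  · calc ∑ k ∈ Finset.Icc 1 (N+N), cc k • (p (k+1) * ∑ a ∈ Finset.Icc 1 N, ∑ b ∈ Finset.Icc 1 N,
        (cc a * cc b) • (p (a+b) * d k (d a (d b f))))
        = ∑ k ∈ Finset.Icc 1 (N+N), ∑ a ∈ Finset.Icc 1 N, ∑ b ∈ Finset.Icc 1 N,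
            (cc k * (cc a * cc b)) • (p (k+1) * (p (a+b) * d k (d a (d b f)))) := by
          refine Finset.sum_congr rfl fun k _ => ?_
          rw [Finset.mul_sum, Finset.smul_sum]
          refine Finset.sum_congr rfl fun a _ => ?_
          rw [Finset.mul_sum, Finset.smul_sum]
          exact Finset.sum_congr rfl fun b _ => pull2 _ _ _ _
      _ = _ := by
          refine (Finset.sum_subset (Finset.Icc_subset_Icc_right
            (le_of_lt (PNat.lt_add_right N N))) ?_).symm
          intro k _ hk
          refine Finset.sum_eq_zero fun a _ => Finset.sum_eq_zero fun b _ => ?_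
          rw [d_comm3, hd3 f N hf a b k (Or.inr (Or.inr (not_mem_I.mp hk))),
            mul_zero, mul_zero, smul_zero]

lemma pieceTwo : L2 (E₂ f) - E₂ (L2 f)
    = (2:R) • ∑ a ∈ Finset.Icc 1 N, ∑ b ∈ Finset.Icc 1 N,
        (cc a * cc b) • (p (a + b + 1) * d a (d b f)) := by
  rw [uL2 f N hf, uE2 f N hf]
  have hc : (∑ a ∈ Finset.Icc 1 N, ∑ b ∈ Finset.Icc 1 N, ∑ i ∈ Finset.Icc 1 N,
      (cc a * cc b * cc i) • (p (a + b) * (p (i+1) * d a (d b (d i f)))))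
      = ∑ k ∈ Finset.Icc 1 N, ∑ a ∈ Finset.Icc 1 N, ∑ b ∈ Finset.Icc 1 N,
      (cc k * (cc a * cc b)) • (p (k+1) * (p (a+b) * d k (d a (d b f)))) := by
    rw [Finset.sum_congr rfl (fun a (_ : a ∈ Finset.Icc 1 N) => Finset.sum_comm), Finset.sum_comm]
    refine Finset.sum_congr rfl fun x _ => Finset.sum_congr rfl fun y _ =>
      Finset.sum_congr rfl fun z _ => ?_
    exact smul_congr (by ring) (by rw [d_comm3 x y z f]; ring)
  rw [hc]
  -- now: T1 + (T2 + S2) - (S1 + S2) = 2 • A0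
  have hT1 : (∑ a ∈ Finset.Icc 1 N, ∑ i ∈ Finset.Icc 1 N,
      (cc a * cc (i+1) * cc i) • (p (a + (i+1)) * d a (d i f)))
      = (∑ a ∈ Finset.Icc 1 N, ∑ b ∈ Finset.Icc 1 N,
        (cc a * cc b * cc b) • (p (a + b + 1) * d a (d b f)))
      + ∑ a ∈ Finset.Icc 1 N, ∑ b ∈ Finset.Icc 1 N,
        (cc a * cc b) • (p (a + b + 1) * d a (d b f)) := by
    rw [← Finset.sum_add_distrib]
    refine Finset.sum_congr rfl fun a _ => ?_
    rw [← Finset.sum_add_distrib]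
    refine Finset.sum_congr rfl fun b _ => ?_
    rw [← add_smul]
    exact smul_congr (by rw [cc_add_one]; ring) (by rw [add_assoc])
  have hT2 : (∑ b ∈ Finset.Icc 1 N, ∑ i ∈ Finset.Icc 1 N,
      (cc (i+1) * cc b * cc i) • (p ((i+1) + b) * d b (d i f)))
      = (∑ a ∈ Finset.Icc 1 N, ∑ b ∈ Finset.Icc 1 N,
        (cc a * cc b * cc b) • (p (a + b + 1) * d a (d b f)))
      + ∑ a ∈ Finset.Icc 1 N, ∑ b ∈ Finset.Icc 1 N,
        (cc a * cc b) • (p (a + b + 1) * d a (d b f)) := by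
    rw [← Finset.sum_add_distrib]
    refine Finset.sum_congr rfl fun a _ => ?_
    rw [← Finset.sum_add_distrib]
    refine Finset.sum_congr rfl fun b _ => ?_
    rw [← add_smul]
    refine smul_congr (by rw [cc_add_one]; ring) ?_
    rw [show (b + 1) + a = a + b + 1 by rw [add_comm (b+1) a, add_assoc]]
  have hS1 : (∑ a ∈ Finset.Icc 1 N, ∑ b ∈ Finset.Icc 1 N,
      (cc (a+b) * (cc a * cc b)) • (p ((a+b) + 1) * d a (d b f)))
      = (∑ a ∈ Finset.Icc 1 N, ∑ b ∈ Finset.Icc 1 N,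
        (cc a * cc a * cc b) • (p (a + b + 1) * d a (d b f)))
      + ∑ a ∈ Finset.Icc 1 N, ∑ b ∈ Finset.Icc 1 N,
        (cc a * cc b * cc b) • (p (a + b + 1) * d a (d b f)) := by
    rw [← Finset.sum_add_distrib]
    refine Finset.sum_congr rfl fun a _ => ?_
    rw [← Finset.sum_add_distrib]
    refine Finset.sum_congr rfl fun b _ => ?_
    rw [← add_smul]
    exact smul_congr (by rw [cc_add]; ring) rfl
  have hkey : (∑ a ∈ Finset.Icc 1 N, ∑ b ∈ Finset.Icc 1 N,
      (cc a * cc a * cc b) • (p (a + b + 1) * d a (d b f)))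
      = ∑ a ∈ Finset.Icc 1 N, ∑ b ∈ Finset.Icc 1 N,
        (cc a * cc b * cc b) • (p (a + b + 1) * d a (d b f)) := by
    rw [Finset.sum_comm]
    refine Finset.sum_congr rfl fun x _ => Finset.sum_congr rfl fun y _ => ?_
    exact smul_congr (by ring) (by rw [d_comm, add_comm y x])
  rw [hT1, hT2, hS1, hkey, two_smul]
  abel

end main4
lemma collapse_shift (N m : ℕ+) (G : ℕ+ → A) :
    (∑ i ∈ Finset.Icc 1 N, if i + 1 = m then G i else 0)
      = if m ≤ N + 1 ∧ 1 < m then G (m - 1) else 0 := by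
  by_cases hm : m ≤ N + 1 ∧ 1 < m
  · obtain ⟨h1, h2⟩ := hm
    rw [if_pos ⟨h1, h2⟩]
    have hmem : m - 1 ∈ Finset.Icc 1 N := by
      rw [mem_I, ← PNat.coe_le_coe, pnat_coe_sub_one h2]
      have g1 : (m:ℕ) ≤ (N:ℕ) + 1 := h1
      omega
    rw [Finset.sum_eq_single_of_mem (m-1) hmem ?other]
    · rw [if_pos (pnat_sub_one_add_one h2)]
    case other =>
      intro i _ hne
      refine if_neg fun he => hne ?_
      rw [← he, pnat_add_one_sub_one]
  · rw [if_neg hm]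
    refine Finset.sum_eq_zero fun i hi => if_neg fun he => hm ?_
    constructor
    · rw [← he]
      exact add_le_add (mem_I.mp hi) le_rfl
    · rw [← he]
      exact pnat_one_lt_add i 1

section main5
variable (f : A) (N : ℕ+) (hf : ∀ i : ℕ+, N < i → d i f = 0)
include hf

lemma uL3 : L3 (E₂ f)
    = (∑ a ∈ Finset.Icc 1 (N+1), ∑ b ∈ Finset.Icc 1 (N+1),
        if a + b ≤ N + 1 then
          ((cc a + cc b) * (cc a + cc b - 1)) • (p a * p b * d (a + b - 1) f) else 0)
      + ∑ a ∈ Finset.Icc 1 N, ∑ b ∈ Finset.Icc 1 N, ∑ i ∈ Finset.Icc 1 N,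
          ((cc a + cc b) * cc i) • (p a * p b * (p (i+1) * d (a + b) (d i f))) := by
  have h1 : L3 (E₂ f) = ∑ a ∈ Finset.Icc 1 (N+1), ∑ b ∈ Finset.Icc 1 (N+1),
      (cc a + cc b) • (p a * p b * d (a + b) (E₂ f)) := by
    apply fin2
    · intro a b hb
      rw [dE0 f N hf (a+b) (lt_trans (not_mem_I.mp hb) (PNat.lt_add_left b a)),
        mul_zero, smul_zero]
    · intro a ha b _
      rw [dE0 f N hf (a+b) (lt_trans (not_mem_I.mp ha) (PNat.lt_add_right a b)),
        mul_zero, smul_zero]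
  rw [h1, Finset.sum_congr rfl (fun a _ => by
      rw [Finset.sum_congr rfl (fun b _ => by
        rw [dE f N hf (a+b), mul_add, smul_add]), Finset.sum_add_distrib]),
    Finset.sum_add_distrib]
  congr 1
  -- K part
  · refine Finset.sum_congr rfl fun a _ => Finset.sum_congr rfl fun b _ => ?_
    rw [Finset.mul_sum, Finset.smul_sum,
      Finset.sum_congr rfl (fun i _ => pull (cc a + cc b) (cc i) (p a * p b) (d i f) _),
      collapse_shift N (a+b) (fun i => ((cc a + cc b) * cc i) • (p a * p b * d i f)),
      if_congr (and_iff_left (pnat_one_lt_add a b)) rfl rfl]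
    split_ifs with h
    · exact smul_congr (by rw [cc_sub_one (pnat_one_lt_add a b), cc_add]) rfl
    · rfl
  -- W part
  · calc ∑ a ∈ Finset.Icc 1 (N+1), ∑ b ∈ Finset.Icc 1 (N+1),
        (cc a + cc b) • (p a * p b * ∑ i ∈ Finset.Icc 1 N,
          cc i • (p (i+1) * d (a+b) (d i f)))
        = ∑ a ∈ Finset.Icc 1 (N+1), ∑ b ∈ Finset.Icc 1 (N+1), ∑ i ∈ Finset.Icc 1 N,
            ((cc a + cc b) * cc i) • (p a * p b * (p (i+1) * d (a+b) (d i f))) := by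
          refine Finset.sum_congr rfl fun a _ => Finset.sum_congr rfl fun b _ => ?_
          rw [Finset.mul_sum, Finset.smul_sum]
          exact Finset.sum_congr rfl fun i _ => pull2 _ _ _ _
      _ = ∑ a ∈ Finset.Icc 1 N, ∑ b ∈ Finset.Icc 1 (N+1), ∑ i ∈ Finset.Icc 1 N,
            ((cc a + cc b) * cc i) • (p a * p b * (p (i+1) * d (a+b) (d i f))) := by
          refine (Finset.sum_subset (Finset.Icc_subset_Icc_right
            (le_of_lt (PNat.lt_add_right N 1))) ?_).symm
          intro a _ ha
          refine Finset.sum_eq_zero fun b _ => Finset.sum_eq_zero fun i _ => ?_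
          rw [hd2 f N hf (a+b) i (Or.inl (lt_trans (not_mem_I.mp ha) (PNat.lt_add_right a b))),
            mul_zero, mul_zero, smul_zero]
      _ = _ := by
          refine Finset.sum_congr rfl fun a _ => ?_
          refine (Finset.sum_subset (Finset.Icc_subset_Icc_right
            (le_of_lt (PNat.lt_add_right N 1))) ?_).symm
          intro b _ hb
          refine Finset.sum_eq_zero fun i _ => ?_
          rw [hd2 f N hf (a+b) i (Or.inl (lt_trans (not_mem_I.mp hb) (PNat.lt_add_left b a))),
            mul_zero, mul_zero, smul_zero]

end main5
section main6
variable (f : A) (N : ℕ+) (hf : ∀ i : ℕ+, N < i → d i f = 0)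
include hf

lemma uE3 : E₂ (L3 f)
    = ((∑ k ∈ Finset.Icc 1 N, ∑ b ∈ Finset.Icc 1 N,
        (cc k * (cc k + cc b)) • (p (k+1) * (p b * d (k + b) f)))
      + ∑ k ∈ Finset.Icc 1 N, ∑ a ∈ Finset.Icc 1 N,
        (cc k * (cc a + cc k)) • (p (k+1) * (p a * d (a + k) f)))
      + ∑ k ∈ Finset.Icc 1 N, ∑ a ∈ Finset.Icc 1 N, ∑ b ∈ Finset.Icc 1 N,
        (cc k * (cc a + cc b)) • (p (k+1) * (p a * p b * d k (d (a + b) f))) := by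
  have h1 : E₂ (L3 f) = ∑ k ∈ Finset.Icc 1 N, cc k • (p (k+1) * d k (L3 f)) :=
    fin1 (fun k hk => by rw [dL3z f N hf k (not_mem_I.mp hk), mul_zero, smul_zero])
  rw [h1, Finset.sum_congr rfl (fun k _ => by
      rw [dL3 f N hf k, mul_add, mul_add, smul_add, smul_add]),
    Finset.sum_add_distrib, Finset.sum_add_distrib]
  congr 1
  congr 1
  -- C1 part
  · refine Finset.sum_congr rfl fun k hk => ?_
    rw [Finset.mul_sum, Finset.smul_sum, Finset.sum_congr rfl (fun a _ => by
      rw [Finset.mul_sum, Finset.smul_sum, Finset.sum_congr rfl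
        (fun b _ => pull (cc k) (cc a + cc b) (p (k+1)) (p b * d (a+b) f) _)]),
      Finset.sum_comm]
    refine Finset.sum_congr rfl fun b _ => ?_
    exact collapse' (mem_I.mpr (mem_I.mp hk))
      (fun a => (cc k * (cc a + cc b)) • (p (k+1) * (p b * d (a + b) f)))
  -- C2 part
  · refine Finset.sum_congr rfl fun k hk => ?_
    rw [Finset.mul_sum, Finset.smul_sum, Finset.sum_congr rfl (fun a _ => by
      rw [Finset.mul_sum, Finset.smul_sum, Finset.sum_congr rfl
        (fun b _ => pull (cc k) (cc a + cc b) (p (k+1)) (p a * d (a+b) f) _)])]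
    refine Finset.sum_congr rfl fun a _ => ?_
    exact collapse' (mem_I.mpr (mem_I.mp hk))
      (fun b => (cc k * (cc a + cc b)) • (p (k+1) * (p a * d (a + b) f)))
  -- W2 part
  · refine Finset.sum_congr rfl fun k _ => ?_
    rw [Finset.mul_sum, Finset.smul_sum]
    refine Finset.sum_congr rfl fun a _ => ?_
    rw [Finset.mul_sum, Finset.smul_sum]
    exact Finset.sum_congr rfl fun b _ => pull2 _ _ _ _

lemma hC1 : (∑ a ∈ Finset.Icc 1 (N+1), ∑ b ∈ Finset.Icc 1 (N+1),
      if a + b ≤ N + 1 then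
        ((cc a - 1) * (cc a - 1 + cc b)) • (p a * p b * d (a + b - 1) f) else 0)
    = ∑ k ∈ Finset.Icc 1 N, ∑ b ∈ Finset.Icc 1 N,
        (cc k * (cc k + cc b)) • (p (k+1) * (p b * d (k + b) f)) := by
  have himg : (Finset.Icc 1 N).image (· + 1) ⊆ Finset.Icc 1 (N+1) := by
    intro x hx
    obtain ⟨k, hk, rfl⟩ := Finset.mem_image.mp hx
    exact mem_I.mpr (add_le_add (mem_I.mp hk) le_rfl)
  calc ∑ a ∈ Finset.Icc 1 (N+1), ∑ b ∈ Finset.Icc 1 (N+1),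
      (if a + b ≤ N + 1 then
        ((cc a - 1) * (cc a - 1 + cc b)) • (p a * p b * d (a + b - 1) f) else 0)
      = ∑ a ∈ (Finset.Icc 1 N).image (· + 1), ∑ b ∈ Finset.Icc 1 (N+1),
        (if a + b ≤ N + 1 then
          ((cc a - 1) * (cc a - 1 + cc b)) • (p a * p b * d (a + b - 1) f) else 0) := by
        refine (Finset.sum_subset himg ?_).symm
        intro a ha hna
        have ha1 : a = 1 := by
          by_contra hne
          have h2 : 1 < a := lt_of_le_of_ne a.one_le (Ne.symm hne)
          refine hna (Finset.mem_image.mpr ⟨a - 1, ?_, pnat_sub_one_add_one h2⟩)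
          rw [mem_I, ← PNat.coe_le_coe, pnat_coe_sub_one h2]
          have g1 : (a:ℕ) ≤ (N:ℕ) + 1 := mem_I.mp ha
          omega
        subst ha1
        refine Finset.sum_eq_zero fun b _ => ?_
        split_ifs
        · rw [cc_one, sub_self, zero_mul, zero_smul]
        · rfl
    _ = ∑ k ∈ Finset.Icc 1 N, ∑ b ∈ Finset.Icc 1 (N+1),
        (if (k+1) + b ≤ N + 1 then
          ((cc (k+1) - 1) * (cc (k+1) - 1 + cc b)) • (p (k+1) * p b * d ((k+1) + b - 1) f) else 0) :=
        Finset.sum_image (fun x _ y _ h => by exact add_right_cancel h)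
    _ = _ := by
        refine Finset.sum_congr rfl fun k hk => ?_
        have hsh : ∀ b : ℕ+, (k+1) + b = (k + b) + 1 := fun b => by
          rw [add_comm k 1, add_assoc, add_comm 1 (k+b)]
        calc ∑ b ∈ Finset.Icc 1 (N+1),
            (if (k+1) + b ≤ N + 1 then
              ((cc (k+1) - 1) * (cc (k+1) - 1 + cc b)) • (p (k+1) * p b * d ((k+1) + b - 1) f) else 0)
            = ∑ b ∈ Finset.Icc 1 N,
              (if (k+1) + b ≤ N + 1 then
                ((cc (k+1) - 1) * (cc (k+1) - 1 + cc b)) • (p (k+1) * p b * d ((k+1) + b - 1) f) else 0) := by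
              refine (Finset.sum_subset (Finset.Icc_subset_Icc_right
                (le_of_lt (PNat.lt_add_right N 1))) ?_).symm
              intro b _ hb
              refine if_neg fun hle => ?_
              have g1 : (k:ℕ) + 1 + (b:ℕ) ≤ (N:ℕ) + 1 := hle
              have g2 : (N:ℕ) < (b:ℕ) := not_mem_I.mp hb
              omega
          _ = _ := by
              refine Finset.sum_congr rfl fun b hb => ?_
              rw [hsh b, pnat_add_one_sub_one]
              by_cases hcond : k + b ≤ N
              · rw [if_pos ((pnat_succ_le_succ_iff (k+b) N).mpr hcond), mul_assoc]
                exact smul_congr (by rw [cc_add_one]; ring) rfl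
              · rw [if_neg (fun hle => hcond ((pnat_succ_le_succ_iff (k+b) N).mp hle))]
                rw [hf (k+b) (not_le.mp hcond), mul_zero, mul_zero, smul_zero]

end main6
section main7
variable (f : A) (N : ℕ+) (hf : ∀ i : ℕ+, N < i → d i f = 0)
include hf

lemma hC2 : (∑ a ∈ Finset.Icc 1 (N+1), ∑ b ∈ Finset.Icc 1 (N+1),
      if a + b ≤ N + 1 then
        ((cc b - 1) * (cc a + cc b - 1)) • (p a * p b * d (a + b - 1) f) else 0)
    = ∑ k ∈ Finset.Icc 1 N, ∑ a ∈ Finset.Icc 1 N,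
        (cc k * (cc a + cc k)) • (p (k+1) * (p a * d (a + k) f)) := by
  have himg : (Finset.Icc 1 N).image (· + 1) ⊆ Finset.Icc 1 (N+1) := by
    intro x hx
    obtain ⟨k, hk, rfl⟩ := Finset.mem_image.mp hx
    exact mem_I.mpr (add_le_add (mem_I.mp hk) le_rfl)
  rw [Finset.sum_comm]
  calc ∑ b ∈ Finset.Icc 1 (N+1), ∑ a ∈ Finset.Icc 1 (N+1),
      (if a + b ≤ N + 1 then
        ((cc b - 1) * (cc a + cc b - 1)) • (p a * p b * d (a + b - 1) f) else 0)
      = ∑ b ∈ (Finset.Icc 1 N).image (· + 1), ∑ a ∈ Finset.Icc 1 (N+1),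
        (if a + b ≤ N + 1 then
          ((cc b - 1) * (cc a + cc b - 1)) • (p a * p b * d (a + b - 1) f) else 0) := by
        refine (Finset.sum_subset himg ?_).symm
        intro b hb hnb
        have hb1 : b = 1 := by
          by_contra hne
          have h2 : 1 < b := lt_of_le_of_ne b.one_le (Ne.symm hne)
          refine hnb (Finset.mem_image.mpr ⟨b - 1, ?_, pnat_sub_one_add_one h2⟩)
          rw [mem_I, ← PNat.coe_le_coe, pnat_coe_sub_one h2]
          have g1 : (b:ℕ) ≤ (N:ℕ) + 1 := mem_I.mp hb
          omega
        subst hb1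
        refine Finset.sum_eq_zero fun a _ => ?_
        split_ifs
        · rw [cc_one, sub_self, zero_mul, zero_smul]
        · rfl
    _ = ∑ k ∈ Finset.Icc 1 N, ∑ a ∈ Finset.Icc 1 (N+1),
        (if a + (k+1) ≤ N + 1 then
          ((cc (k+1) - 1) * (cc a + cc (k+1) - 1)) • (p a * p (k+1) * d (a + (k+1) - 1) f) else 0) :=
        Finset.sum_image (fun x _ y _ h => by exact add_right_cancel h)
    _ = _ := by
        refine Finset.sum_congr rfl fun k hk => ?_
        calc ∑ a ∈ Finset.Icc 1 (N+1),
            (if a + (k+1) ≤ N + 1 then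
              ((cc (k+1) - 1) * (cc a + cc (k+1) - 1)) • (p a * p (k+1) * d (a + (k+1) - 1) f) else 0)
            = ∑ a ∈ Finset.Icc 1 N,
              (if a + (k+1) ≤ N + 1 then
                ((cc (k+1) - 1) * (cc a + cc (k+1) - 1)) • (p a * p (k+1) * d (a + (k+1) - 1) f) else 0) := by
              refine (Finset.sum_subset (Finset.Icc_subset_Icc_right
                (le_of_lt (PNat.lt_add_right N 1))) ?_).symm
              intro a _ ha
              refine if_neg fun hle => ?_
              have g1 : (a:ℕ) + ((k:ℕ) + 1) ≤ (N:ℕ) + 1 := hle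
              have g2 : (N:ℕ) < (a:ℕ) := not_mem_I.mp ha
              have g3 : (1:ℕ) ≤ (k:ℕ) := k.one_le
              omega
          _ = _ := by
              refine Finset.sum_congr rfl fun a ha => ?_
              rw [← add_assoc, pnat_add_one_sub_one]
              by_cases hcond : a + k ≤ N
              · rw [if_pos ((pnat_succ_le_succ_iff (a+k) N).mpr hcond)]
                exact smul_congr (by rw [cc_add_one]; ring) (by ring)
              · rw [if_neg (fun hle => hcond ((pnat_succ_le_succ_iff (a+k) N).mp hle))]
                rw [hf (a+k) (not_le.mp hcond), mul_zero, mul_zero, smul_zero]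

end main7
section main8
variable (f : A) (N : ℕ+) (hf : ∀ i : ℕ+, N < i → d i f = 0)
include hf

lemma pieceThree : L3 (E₂ f) - E₂ (L3 f)
    = (2:R) • ∑ a ∈ Finset.Icc 1 (N+1), ∑ b ∈ Finset.Icc 1 (N+1),
        (if a + b ≤ N + 1 then
          (cc a + cc b - 1) • (p a * p b * d (a + b - 1) f) else 0) := by
  rw [uL3 f N hf, uE3 f N hf]
  have hW : (∑ a ∈ Finset.Icc 1 N, ∑ b ∈ Finset.Icc 1 N, ∑ i ∈ Finset.Icc 1 N,
      ((cc a + cc b) * cc i) • (p a * p b * (p (i+1) * d (a + b) (d i f))))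
      = ∑ k ∈ Finset.Icc 1 N, ∑ a ∈ Finset.Icc 1 N, ∑ b ∈ Finset.Icc 1 N,
        (cc k * (cc a + cc b)) • (p (k+1) * (p a * p b * d k (d (a + b) f))) := by
    rw [Finset.sum_congr rfl (fun a (_ : a ∈ Finset.Icc 1 N) => Finset.sum_comm), Finset.sum_comm]
    refine Finset.sum_congr rfl fun x _ => Finset.sum_congr rfl fun y _ =>
      Finset.sum_congr rfl fun z _ => ?_
    exact smul_congr (by ring) (by rw [d_comm]; ring)
  rw [hW, add_sub_add_right_eq_sub, ← hC1 f N hf, ← hC2 f N hf,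
    ← Finset.sum_add_distrib,
    Finset.sum_congr rfl (fun a (_ : a ∈ Finset.Icc 1 (N+1)) =>
      (Finset.sum_add_distrib (s := Finset.Icc 1 (N+1))).symm),
    ← Finset.sum_sub_distrib,
    Finset.sum_congr rfl (fun a (_ : a ∈ Finset.Icc 1 (N+1)) =>
      (Finset.sum_sub_distrib (s := Finset.Icc 1 (N+1)) _ _).symm),
    Finset.smul_sum,
    Finset.sum_congr rfl (fun a (_ : a ∈ Finset.Icc 1 (N+1)) =>
      Finset.smul_sum (s := Finset.Icc 1 (N+1)))]
  refine Finset.sum_congr rfl fun a _ => Finset.sum_congr rfl fun b _ => ?_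
  split_ifs with h
  · rw [smul_smul, ← add_smul, ← sub_smul]
    exact smul_congr (by ring) rfl
  · simp

end main8
lemma Dal_eq (g : A) : Dal g
    = (Polynomial.C (1/2 : ℚ) * (α - 1)) • L1 g
      + (Polynomial.C (1/2 : ℚ) * α) • L2 g
      + Polynomial.C (1/2 : ℚ) • L3 g := rfl

lemma pull3 (a C : R) (x w : A) : a • (x * (C • w)) = C • (a • (x * w)) := by
  rw [mul_smul_comm, smul_comm]

section main9
variable (f : A) (N : ℕ+) (hf : ∀ i : ℕ+, N < i → d i f = 0)
include hf

lemma RHS1conv : (∑ᶠ i : ℕ+, ((((i : ℕ) : R) - 1) ^ 2) • (p i * d (i - 1) f))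
    = ∑ k ∈ Finset.Icc 1 N, (cc k * cc k) • (p (k+1) * d k f) := by
  have himg : (Finset.Icc 1 N).image (· + 1) ⊆ Finset.Icc 1 (N+1) := by
    intro x hx
    obtain ⟨k, hk, rfl⟩ := Finset.mem_image.mp hx
    exact mem_I.mpr (add_le_add (mem_I.mp hk) le_rfl)
  have h1 : (∑ᶠ i : ℕ+, ((cc i - 1) ^ 2) • (p i * d (i - 1) f))
      = ∑ i ∈ Finset.Icc 1 (N+1), ((cc i - 1) ^ 2) • (p i * d (i - 1) f) := by
    apply fin1
    intro i hi
    rw [hf (i-1) (pnat_lt_sub_one (not_mem_I.mp hi)), mul_zero, smul_zero]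
  rw [h1]
  calc ∑ i ∈ Finset.Icc 1 (N+1), ((cc i - 1) ^ 2) • (p i * d (i - 1) f)
      = ∑ i ∈ (Finset.Icc 1 N).image (· + 1), ((cc i - 1) ^ 2) • (p i * d (i - 1) f) := by
        refine (Finset.sum_subset himg ?_).symm
        intro i hi hni
        have hi1 : i = 1 := by
          by_contra hne
          have h2 : 1 < i := lt_of_le_of_ne i.one_le (Ne.symm hne)
          refine hni (Finset.mem_image.mpr ⟨i - 1, ?_, pnat_sub_one_add_one h2⟩)
          rw [mem_I, ← PNat.coe_le_coe, pnat_coe_sub_one h2]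
          have g1 : (i:ℕ) ≤ (N:ℕ) + 1 := mem_I.mp hi
          omega
        subst hi1
        rw [cc_one, sub_self, pow_two, zero_mul, zero_smul]
    _ = ∑ k ∈ Finset.Icc 1 N, ((cc (k+1) - 1) ^ 2) • (p (k+1) * d ((k+1) - 1) f) :=
        Finset.sum_image (fun x _ y _ h => by exact add_right_cancel h)
    _ = _ := by
        refine Finset.sum_congr rfl fun k _ => ?_
        rw [pnat_add_one_sub_one]
        exact smul_congr (by rw [cc_add_one]; ring) rfl

lemma RHS2conv : (∑ᶠ i : ℕ+, ∑ᶠ j : ℕ+,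
      (((i : ℕ) : R) * ((j : ℕ) : R)) • (p (i + j + 1) * d i (d j f)))
    = ∑ a ∈ Finset.Icc 1 N, ∑ b ∈ Finset.Icc 1 N,
        (cc a * cc b) • (p (a + b + 1) * d a (d b f)) := by
  apply fin2
  · intro a b hb
    rw [hd2 f N hf a b (Or.inr (not_mem_I.mp hb)), mul_zero, smul_zero]
  · intro a ha b _
    rw [hd2 f N hf a b (Or.inl (not_mem_I.mp ha)), mul_zero, smul_zero]

lemma RHS3conv : (∑ᶠ i : ℕ+, ∑ᶠ j : ℕ+,
      (((i : ℕ) : R) + ((j : ℕ) : R) - 1) • (p i * p j * d (i + j - 1) f))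
    = ∑ a ∈ Finset.Icc 1 (N+1), ∑ b ∈ Finset.Icc 1 (N+1),
        (if a + b ≤ N + 1 then
          (cc a + cc b - 1) • (p a * p b * d (a + b - 1) f) else 0) := by
  have h1 : (∑ᶠ i : ℕ+, ∑ᶠ j : ℕ+, (cc i + cc j - 1) • (p i * p j * d (i + j - 1) f))
      = ∑ a ∈ Finset.Icc 1 (N+1), ∑ b ∈ Finset.Icc 1 (N+1),
        (cc a + cc b - 1) • (p a * p b * d (a + b - 1) f) := by
    apply fin2
    · intro a b hb
      rw [hf (a+b-1) (pnat_lt_sub_one (lt_trans (not_mem_I.mp hb) (PNat.lt_add_left b a))),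
        mul_zero, smul_zero]
    · intro a ha b _
      rw [hf (a+b-1) (pnat_lt_sub_one (lt_trans (not_mem_I.mp ha) (PNat.lt_add_right a b))),
        mul_zero, smul_zero]
  rw [h1]
  refine Finset.sum_congr rfl fun a _ => Finset.sum_congr rfl fun b _ => ?_
  by_cases h : a + b ≤ N + 1
  · rw [if_pos h]
  · rw [if_neg h, hf (a+b-1) (pnat_lt_sub_one (not_le.mp h)), mul_zero, smul_zero]

lemma eDal : E₂ (Dal f)
    = (Polynomial.C (1/2 : ℚ) * (α - 1)) • E₂ (L1 f)
      + (Polynomial.C (1/2 : ℚ) * α) • E₂ (L2 f)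
      + Polynomial.C (1/2 : ℚ) • E₂ (L3 f) := by
  have hNN : N ≤ N + N := le_of_lt (PNat.lt_add_right N N)
  have hz1 : ∀ k : ℕ+, k ∉ Finset.Icc 1 (N+N) → d k (L1 f) = 0 :=
    fun k hk => dL1z f N hf k (lt_of_le_of_lt hNN (not_mem_I.mp hk))
  have hz3 : ∀ k : ℕ+, k ∉ Finset.Icc 1 (N+N) → d k (L3 f) = 0 :=
    fun k hk => dL3z f N hf k (lt_of_le_of_lt hNN (not_mem_I.mp hk))
  have hz2 : ∀ k : ℕ+, k ∉ Finset.Icc 1 (N+N) → d k (L2 f) = 0 :=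
    fun k hk => dL2z f N hf k (not_mem_I.mp hk)
  have h1 : E₂ (Dal f) = ∑ k ∈ Finset.Icc 1 (N+N), cc k • (p (k+1) * d k (Dal f)) := by
    apply fin1
    intro k hk
    rw [Dal_eq, d_add, d_add, d_smul, d_smul, d_smul, hz1 k hk, hz2 k hk, hz3 k hk]
    simp
  have hE1 : E₂ (L1 f) = ∑ k ∈ Finset.Icc 1 (N+N), cc k • (p (k+1) * d k (L1 f)) :=
    fin1 (fun k hk => by rw [hz1 k hk, mul_zero, smul_zero])
  have hE2 : E₂ (L2 f) = ∑ k ∈ Finset.Icc 1 (N+N), cc k • (p (k+1) * d k (L2 f)) :=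
    fin1 (fun k hk => by rw [hz2 k hk, mul_zero, smul_zero])
  have hE3 : E₂ (L3 f) = ∑ k ∈ Finset.Icc 1 (N+N), cc k • (p (k+1) * d k (L3 f)) :=
    fin1 (fun k hk => by rw [hz3 k hk, mul_zero, smul_zero])
  rw [h1, hE1, hE2, hE3,
    Finset.sum_congr rfl (fun k (_ : k ∈ Finset.Icc 1 (N+N)) => by
      rw [Dal_eq, d_add, d_add, d_smul, d_smul, d_smul, mul_add, mul_add,
        smul_add, smul_add, pull3, pull3, pull3]),
    Finset.sum_add_distrib, Finset.sum_add_distrib,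
    ← Finset.smul_sum, ← Finset.smul_sum, ← Finset.smul_sum]

end main9

lemma hcomb (c1 c2 c3 : R) (x1 x2 x3 y1 y2 y3 : A) :
    (c1 • x1 + c2 • x2 + c3 • x3) - (c1 • y1 + c2 • y2 + c3 • y3)
      = c1 • (x1 - y1) + c2 • (x2 - y2) + c3 • (x3 - y3) := by
  rw [smul_sub, smul_sub, smul_sub]
  abel

lemma half_two : Polynomial.C (1/2 : ℚ) * (2:R) = 1 := by
  rw [show (2:R) = Polynomial.C (2:ℚ) by norm_cast, ← map_mul]
  norm_num

theorem Delta_explicit (f : A) :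
    Δop f
      = (α - 1) • (∑ᶠ i : ℕ+, ((((i : ℕ) : R) - 1) ^ 2) • (p i * d (i - 1) f))
      + α • (∑ᶠ i : ℕ+, ∑ᶠ j : ℕ+,
          (((i : ℕ) : R) * ((j : ℕ) : R)) • (p (i + j + 1) * d i (d j f)))
      + ∑ᶠ i : ℕ+, ∑ᶠ j : ℕ+,
          (((i : ℕ) : R) + ((j : ℕ) : R) - 1) • (p i * p j * d (i + j - 1) f) := by
  set n : ℕ := f.vars.sup PNat.val with hn
  set N : ℕ+ := ⟨n+1, Nat.succ_pos n⟩ with hNdef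
  have hf : ∀ i : ℕ+, N < i → d i f = 0 := by
    intro i hi
    apply d_zero_of
    intro hmem
    have h1 : (i:ℕ) ≤ n := Finset.le_sup (f := PNat.val) hmem
    have h2 : (N:ℕ) < (i:ℕ) := hi
    have h3 : (N:ℕ) = n + 1 := rfl
    omega
  rw [show Δop f = Dal (E₂ f) - E₂ (Dal f) from rfl, Dal_eq (E₂ f), eDal f N hf,
    RHS1conv f N hf, RHS2conv f N hf, RHS3conv f N hf, hcomb,
    pieceOne f N hf, pieceTwo f N hf, pieceThree f N hf,
    smul_smul, smul_smul, smul_smul]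
  refine congrArg₂ (· + ·) (congrArg₂ (· + ·) ?_ ?_) ?_
  · refine smul_congr ?_ rfl
    calc Polynomial.C (1/2:ℚ) * (α - 1) * 2 = Polynomial.C (1/2:ℚ) * (2:R) * (α - 1) := by ring
      _ = α - 1 := by rw [half_two, one_mul]
  · refine smul_congr ?_ rfl
    calc Polynomial.C (1/2:ℚ) * α * 2 = Polynomial.C (1/2:ℚ) * (2:R) * α := by ring
      _ = α := by rw [half_two, one_mul]
  · rw [half_two, one_smul]
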